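/- arXiv:2601.00729 — 2 statements merged into one kernel-verified Lean document; each statement's English description precedes it below -/
import Mathlib

section
/- The Fourier transform converts the t-product into face-wise products: if C = A * B is the t-product of A ∈ ℝ^{m×ℓ×p} and B ∈ ℝ^{ℓ×n×p}, then the frontal slices of the mode-3 DFT satisfy Ĉ_i = Â_i B̂_i for i = 1,…,p. -/
open Complex Matrix BigOperators
open scoped Kronecker

/-- primitive root ω = exp(-2πi/p) used in the DFT. -/
noncomputable def tOmega (p : ℕ) : ℂ := Complex.exp (-(2 * Real.pi * Complex.I) / p)

/-- unitary DFT matrix of order ℓ, (F)_{k,j} = ω^{k j}/√ℓ (0-based indices). -/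
noncomputable def dftMatrix (ℓ : ℕ) : Matrix (Fin ℓ) (Fin ℓ) ℂ :=
  Matrix.of fun k j => (tOmega ℓ) ^ ((k : ℕ) * (j : ℕ)) / (Real.sqrt ℓ : ℂ)

/-- unnormalized mode-3 DFT of a real third-order tensor given by its frontal slices. -/
noncomputable def dft3 {m n p : ℕ} (A : Fin p → Matrix (Fin m) (Fin n) ℝ) :
    Fin p → Matrix (Fin m) (Fin n) ℂ :=
  fun k => ∑ l : Fin p, (tOmega p) ^ ((k : ℕ) * (l : ℕ)) • (A l).map (fun x => (x : ℂ))

/-- t-product of third-order tensors (circular convolution of frontal slices),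
    equivalently MatVec⁻¹[Bcirc(A)·MatVec(B)]. -/
def tProd {m l n p : ℕ} (A : Fin p → Matrix (Fin m) (Fin l) ℝ)
    (B : Fin p → Matrix (Fin l) (Fin n) ℝ) : Fin p → Matrix (Fin m) (Fin n) ℝ :=
  fun k => ∑ j : Fin p, A (k - j) * B j

/-- t-transpose: transpose each frontal slice and reverse the order of slices 2,…,p. -/
def tTrans {m n p : ℕ} (A : Fin p → Matrix (Fin m) (Fin n) ℝ) :
    Fin p → Matrix (Fin n) (Fin m) ℝ :=
  fun k => (A (-k))ᵀ

/-- identity tensor: first frontal slice is I, the others vanish. -/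
def tId (m p : ℕ) : Fin p → Matrix (Fin m) (Fin m) ℝ :=
  fun k => if (k : ℕ) = 0 then 1 else 0

/-- f-trace: average of the traces of the Fourier-domain frontal slices. -/
noncomputable def tTraceF {m p : ℕ} (A : Fin p → Matrix (Fin m) (Fin m) ℝ) : ℂ :=
  (1 / (p : ℂ)) * ∑ i : Fin p, (dft3 A i).trace

/-- squared Frobenius norm of a tensor. -/
def frob2 {m n p : ℕ} (A : Fin p → Matrix (Fin m) (Fin n) ℝ) : ℝ :=
  ∑ k : Fin p, ∑ r : Fin m, ∑ c : Fin n, (A k r c) ^ 2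

/-- Frobenius inner product of tensors. -/
def finner {m n p : ℕ} (A B : Fin p → Matrix (Fin m) (Fin n) ℝ) : ℝ :=
  ∑ k : Fin p, ∑ r : Fin m, ∑ c : Fin n, A k r c * B k r c

/-- block circulant matrix of a tensor (complex-valued entries). -/
noncomputable def bcirc {m n p : ℕ} (A : Fin p → Matrix (Fin m) (Fin n) ℝ) :
    Matrix (Fin p × Fin m) (Fin p × Fin n) ℂ :=
  Matrix.of fun x y => (A (x.1 - y.1) x.2 y.2 : ℂ)

lemma tOmega_pow_p {p : ℕ} (hp : 0 < p) : tOmega p ^ p = 1 := by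
  unfold tOmega
  rw [← Complex.exp_nat_mul]
  have h : (p:ℂ) ≠ 0 := Nat.cast_ne_zero.mpr hp.ne'
  rw [mul_div_cancel₀ _ h]
  simpa using Complex.exp_int_mul_two_pi_mul_I (-1)

lemma tOmega_pow_add {p : ℕ} (a b : Fin p) (i : ℕ) :
    tOmega p ^ (i * ((a + b : Fin p) : ℕ)) = tOmega p ^ (i * (a:ℕ)) * tOmega p ^ (i * (b:ℕ)) := by
  have hp : 0 < p := a.pos
  have h1 : tOmega p ^ ((a + b : Fin p) : ℕ) = tOmega p ^ ((a:ℕ) + (b:ℕ)) := by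
    conv_rhs => rw [← Nat.mod_add_div ((a:ℕ)+(b:ℕ)) p]
    rw [pow_add, pow_mul, tOmega_pow_p hp, one_pow, mul_one, Fin.add_def]
  rw [mul_comm i, pow_mul, h1, pow_add, mul_pow, ← pow_mul, ← pow_mul,
    mul_comm (a:ℕ) i, mul_comm (b:ℕ) i]

/-- The Fourier transform converts the t-product into face-wise matrix products. -/
theorem dft3_tprod (m l n p : ℕ) (A : Fin p → Matrix (Fin m) (Fin l) ℝ)
    (B : Fin p → Matrix (Fin l) (Fin n) ℝ) :
    ∀ i : Fin p, dft3 (tProd A B) i = dft3 A i * dft3 B i := by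
  intro i
  haveI : NeZero p := ⟨i.pos.ne'⟩
  unfold dft3 tProd
  simp_rw [Matrix.sum_mul, Matrix.mul_sum]
  have hmap : ∀ k : Fin p, ((∑ j : Fin p, A (k - j) * B j).map (fun x : ℝ => (x:ℂ)))
      = ∑ j : Fin p, ((A (k - j)).map (fun x : ℝ => (x:ℂ))) * ((B j).map (fun x : ℝ => (x:ℂ))) := by
    intro k
    ext r c
    simp [Matrix.map_apply, Matrix.sum_apply, Matrix.mul_apply, Finset.mul_sum]
  calc
    ∑ k : Fin p, tOmega p ^ ((i:ℕ) * (k:ℕ)) • ((∑ j : Fin p, A (k - j) * B j).map (fun x : ℝ => (x:ℂ)))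
        = ∑ k : Fin p, ∑ j : Fin p, tOmega p ^ ((i:ℕ) * (k:ℕ)) •
            (((A (k - j)).map (fun x : ℝ => (x:ℂ))) * ((B j).map (fun x : ℝ => (x:ℂ)))) := by
          simp_rw [hmap, Finset.smul_sum]
    _ = ∑ j : Fin p, ∑ a : Fin p, tOmega p ^ ((i:ℕ) * ((a + j : Fin p):ℕ)) •
            (((A a).map (fun x : ℝ => (x:ℂ))) * ((B j).map (fun x : ℝ => (x:ℂ)))) := by
          rw [Finset.sum_comm]
          refine Finset.sum_congr rfl fun j _ => ?_
          refine Fintype.sum_equiv (Equiv.subRight j) _ _ fun a => ?_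
          simp
    _ = ∑ a : Fin p, ∑ j : Fin p,
          (tOmega p ^ ((i:ℕ) * (a:ℕ)) • ((A a).map (fun x : ℝ => (x:ℂ)))) *
          (tOmega p ^ ((i:ℕ) * (j:ℕ)) • ((B j).map (fun x : ℝ => (x:ℂ)))) := by
          rw [Finset.sum_comm]
          refine Finset.sum_congr rfl fun a _ => Finset.sum_congr rfl fun j _ => ?_
          rw [tOmega_pow_add, Matrix.smul_mul, Matrix.mul_smul, smul_smul]
end

section
/- Generalized trace maximization: let A, B ∈ ℝ^{m×m} be symmetric with B positive definite, and d ≤ m. Then the maximum of Trace(VᵀAV) over V ∈ ℝ^{m×d} subject to VᵀBV = I_d equals the sum of the d largest generalized eigenvalues μ_1 ≥ … ≥ μ_d of the pair (A, B), i.e., the d largest eigenvalues of B^{-1/2} A B^{-1/2}. -/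
open Complex Matrix BigOperators
open scoped Kronecker

lemma aux_sum_ind {m : ℕ} (d : ℕ) (hd : d ≤ m) (f : Fin m → ℝ) :
    ∑ i : Fin m, (if (i : ℕ) < d then f i else 0) = ∑ j : Fin d, f (Fin.castLE hd j) := by
  have h1 : ∑ i : Fin m, (if (i : ℕ) < d then f i else 0)
      = ∑ n ∈ Finset.range m, (if n < d then (fun n => if h : n < m then f ⟨n, h⟩ else 0) n else 0) := by
    rw [← Fin.sum_univ_eq_sum_range]
    apply Finset.sum_congr rfl
    intro i _
    simp [i.isLt]
  have h2 : ∑ j : Fin d, f (Fin.castLE hd j)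
      = ∑ n ∈ Finset.range d, (fun n => if h : n < m then f ⟨n, h⟩ else 0) n := by
    rw [← Fin.sum_univ_eq_sum_range]
    apply Finset.sum_congr rfl
    intro j _
    have hj : (j : ℕ) < m := lt_of_lt_of_le j.isLt hd
    simp [hj, Fin.castLE]
  rw [h1, h2, ← Finset.sum_filter]
  congr 1
  ext n
  simp only [Finset.mem_filter, Finset.mem_range]
  omega

lemma aux_key {m d : ℕ} (hd : d ≤ m) (μ : Fin m → ℝ) (hdec : Antitone μ)
    (Y : Matrix (Fin m) (Fin d) ℝ) (hY : Yᵀ * Y = 1) :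
    (Yᵀ * Matrix.diagonal μ * Y).trace ≤ ∑ j : Fin d, μ (Fin.castLE hd j) := by
  set c : Fin m → ℝ := fun i => ∑ j : Fin d, (Y i j) ^ 2 with hc
  have htr : (Yᵀ * Matrix.diagonal μ * Y).trace = ∑ i : Fin m, μ i * c i := by
    simp only [Matrix.trace, Matrix.diag, Matrix.mul_apply, Matrix.transpose_apply,
      Matrix.diagonal_apply, Finset.sum_ite_eq, Finset.mem_univ, if_true]
    rw [Finset.sum_comm]
    apply Finset.sum_congr rfl
    intro i _
    simp only [hc, Finset.mul_sum]
    apply Finset.sum_congr rfl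
    intro j _
    simp only [mul_ite, mul_zero, Finset.sum_ite_eq', Finset.mem_univ, if_true]
    ring
  have hc0 : ∀ i, 0 ≤ c i := fun i => Finset.sum_nonneg fun j _ => sq_nonneg _
  have hsum : ∑ i : Fin m, c i = d := by
    have h1 : (Yᵀ * Y).trace = ∑ i : Fin m, c i := by
      simp only [Matrix.trace, Matrix.diag, Matrix.mul_apply, Matrix.transpose_apply]
      rw [Finset.sum_comm]
      apply Finset.sum_congr rfl
      intro i _
      simp only [hc]
      exact Finset.sum_congr rfl fun j _ => (sq (Y i j)).symm
    rw [hY] at h1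
    simp at h1
    exact h1.symm
  -- P = Y * Yᵀ : projection
  set P : Matrix (Fin m) (Fin m) ℝ := Y * Yᵀ with hP
  have hPP : P * P = P := by
    rw [hP, Matrix.mul_assoc, ← Matrix.mul_assoc Yᵀ, hY, Matrix.one_mul]
  have hPdiag : ∀ i, P i i = c i := by
    intro i
    simp only [hP, Matrix.mul_apply, Matrix.transpose_apply, hc]
    exact Finset.sum_congr rfl fun j _ => (sq (Y i j)).symm
  have hPsymm : ∀ i k, P k i = P i k := by
    intro i k
    simp only [hP, Matrix.mul_apply, Matrix.transpose_apply]
    exact Finset.sum_congr rfl fun j _ => mul_comm _ _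
  have hc1 : ∀ i, c i ≤ 1 := by
    intro i
    have h1 : c i = ∑ k : Fin m, (P i k) ^ 2 := by
      rw [← hPdiag i]
      conv_lhs => rw [← hPP]
      simp only [Matrix.mul_apply]
      exact Finset.sum_congr rfl fun k _ => by rw [hPsymm i k, sq]
    have h2 : (P i i) ^ 2 ≤ ∑ k : Fin m, (P i k) ^ 2 :=
      Finset.single_le_sum (f := fun k => (P i k) ^ 2) (fun k _ => sq_nonneg _) (Finset.mem_univ i)
    rw [hPdiag i] at h2
    nlinarith [hc0 i, h2, h1]
  rw [htr]
  -- rearrangement bound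
  rcases eq_or_lt_of_le hd with heq | hlt
  · -- d = m : all c i = 1
    subst heq
    have hall : ∀ i, c i = 1 := by
      by_contra hcon
      push_neg at hcon
      obtain ⟨i0, hi0⟩ := hcon
      have : ∑ i : Fin d, c i < ∑ i : Fin d, (1 : ℝ) := by
        apply Finset.sum_lt_sum (fun i _ => hc1 i)
        exact ⟨i0, Finset.mem_univ _, lt_of_le_of_ne (hc1 i0) hi0⟩
      simp [hsum] at this
    have : ∑ i : Fin d, μ i * c i = ∑ i : Fin d, μ i := by
      exact Finset.sum_congr rfl fun i _ => by rw [hall i, mul_one]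
    rw [this]
    exact le_of_eq (Finset.sum_congr rfl fun j _ => rfl)
  · set t : ℝ := μ ⟨d, hlt⟩ with ht
    have hstep : ∀ i : Fin m, μ i * c i ≤ (if (i : ℕ) < d then μ i - t else 0) + t * c i := by
      intro i
      by_cases hid : (i : ℕ) < d
      · have hμt : t ≤ μ i := hdec (by simp [Fin.le_def]; omega)
        simp only [hid, if_true]
        nlinarith [hc1 i, hc0 i]
      · have hμt : μ i ≤ t := hdec (by simp [Fin.le_def]; omega)
        simp only [hid, if_false]
        nlinarith [hc0 i]
    calc ∑ i : Fin m, μ i * c i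
        ≤ ∑ i : Fin m, ((if (i : ℕ) < d then μ i - t else 0) + t * c i) :=
          Finset.sum_le_sum fun i _ => hstep i
      _ = (∑ i : Fin m, (if (i : ℕ) < d then μ i - t else 0)) + t * ∑ i : Fin m, c i := by
          rw [Finset.sum_add_distrib, Finset.mul_sum]
      _ = (∑ j : Fin d, (μ (Fin.castLE hd j) - t)) + t * d := by
          rw [aux_sum_ind d hd (fun i => μ i - t), hsum]
      _ = ∑ j : Fin d, μ (Fin.castLE hd j) := by
          rw [Finset.sum_sub_distrib]
          simp
          ring

/-- Generalized trace maximization: max of Trace(VᵀAV) subject to VᵀBV = I equals the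
    sum of the d largest eigenvalues of B^{-1/2} A B^{-1/2}. -/
theorem generalized_trace_max (m d : ℕ) (hd : d ≤ m) (A B : Matrix (Fin m) (Fin m) ℝ)
    (hA : A.IsHermitian) (hB : B.PosDef)
    (S : Matrix (Fin m) (Fin m) ℝ) (hS : S.PosDef) (hSS : S * S = B)
    (U : Matrix (Fin m) (Fin m) ℝ) (μ : Fin m → ℝ)
    (hU : Uᵀ * U = 1) (hdec : Antitone μ)
    (hspec : S⁻¹ * A * S⁻¹ = U * Matrix.diagonal μ * Uᵀ) :
    IsGreatest { t : ℝ | ∃ V : Matrix (Fin m) (Fin d) ℝ,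
        Vᵀ * B * V = 1 ∧ (Vᵀ * A * V).trace = t }
      (∑ j : Fin d, μ (Fin.castLE hd j)) := by
  -- basic facts
  have hSymS : Sᵀ = S := by
    have := hS.isHermitian
    simpa [Matrix.IsHermitian, Matrix.conjTranspose_eq_transpose_of_trivial] using this
  have hSdet : IsUnit S.det := (isUnit_iff_isUnit_det S).mp hS.isUnit
  have hSinv : S * S⁻¹ = 1 := Matrix.mul_nonsing_inv S hSdet
  have hinvS : S⁻¹ * S = 1 := Matrix.nonsing_inv_mul S hSdet
  have hSinvT : (S⁻¹)ᵀ = S⁻¹ := by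
    calc (S⁻¹)ᵀ = (Sᵀ)⁻¹ := Matrix.transpose_nonsing_inv S
      _ = S⁻¹ := by rw [hSymS]
  have hUU : U * Uᵀ = 1 := by rwa [mul_eq_one_comm] at hU
  -- cancellation helpers
  have cS : ∀ {k : ℕ} (X : Matrix (Fin m) (Fin k) ℝ), S * (S⁻¹ * X) = X := by
    intro k X; rw [← Matrix.mul_assoc, hSinv, Matrix.one_mul]
  have cS' : ∀ {k : ℕ} (X : Matrix (Fin m) (Fin k) ℝ), S⁻¹ * (S * X) = X := by
    intro k X; rw [← Matrix.mul_assoc, hinvS, Matrix.one_mul]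
  have cU : ∀ {k : ℕ} (X : Matrix (Fin m) (Fin k) ℝ), Uᵀ * (U * X) = X := by
    intro k X; rw [← Matrix.mul_assoc, hU, Matrix.one_mul]
  have cU' : ∀ {k : ℕ} (X : Matrix (Fin m) (Fin k) ℝ), U * (Uᵀ * X) = X := by
    intro k X; rw [← Matrix.mul_assoc, hUU, Matrix.one_mul]
  -- A in terms of the spectral data
  have hA' : A = S * (U * (Matrix.diagonal μ * (Uᵀ * S))) := by
    have h : S * (S⁻¹ * A * S⁻¹ * S) = S * (U * Matrix.diagonal μ * Uᵀ * S) := by rw [hspec]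
    calc A = S * (S⁻¹ * A * S⁻¹ * S) := by
          rw [Matrix.mul_assoc (S⁻¹ * A) S⁻¹ S, hinvS, Matrix.mul_one, ← Matrix.mul_assoc,
            hSinv, Matrix.one_mul]
      _ = S * (U * Matrix.diagonal μ * Uᵀ * S) := h
      _ = S * (U * (Matrix.diagonal μ * (Uᵀ * S))) := by simp only [Matrix.mul_assoc]
  constructor
  · -- membership
    set E : Matrix (Fin m) (Fin d) ℝ :=
      Matrix.of fun i j => if i = Fin.castLE hd j then 1 else 0 with hE
    have hEE : Eᵀ * E = 1 := by
      ext j j'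
      simp only [Matrix.mul_apply, Matrix.transpose_apply, hE, Matrix.of_apply,
        Matrix.one_apply, ite_mul, one_mul, zero_mul, Finset.sum_ite_eq', Finset.mem_univ,
        if_true]
      by_cases h : j = j'
      · subst h; simp
      · have : Fin.castLE hd j ≠ Fin.castLE hd j' := fun hc => h (Fin.castLE_injective hd hc)
        simp [h, this.symm]
    refine ⟨S⁻¹ * (U * E), ?_, ?_⟩
    · rw [← hSS, Matrix.transpose_mul, Matrix.transpose_mul, hSinvT]
      simp only [Matrix.mul_assoc]
      rw [cS, cS', cU, hEE]
    · have hform : (S⁻¹ * (U * E))ᵀ * A * (S⁻¹ * (U * E)) = Eᵀ * (Matrix.diagonal μ * E) := by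
        rw [Matrix.transpose_mul, Matrix.transpose_mul, hSinvT, hA']
        simp only [Matrix.mul_assoc]
        rw [cS, cU, cS', cU]
      rw [hform]
      simp only [Matrix.trace, Matrix.diag, Matrix.mul_apply, Matrix.transpose_apply,
        Matrix.diagonal_apply, hE, Matrix.of_apply, ite_mul, one_mul, zero_mul, mul_ite,
        mul_zero, mul_one, Finset.sum_ite_eq, Finset.sum_ite_eq', Finset.mem_univ, if_true]
  · -- upper bound
    rintro t ⟨V, hVB, hVt⟩
    set Y : Matrix (Fin m) (Fin d) ℝ := Uᵀ * (S * V) with hY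
    have hYY : Yᵀ * Y = 1 := by
      rw [hY, Matrix.transpose_mul, Matrix.transpose_mul, hSymS, Matrix.transpose_transpose]
      simp only [Matrix.mul_assoc]
      rw [cU']
      rw [← hSS] at hVB
      simp only [Matrix.mul_assoc] at hVB
      exact hVB
    have hform : Vᵀ * A * V = Yᵀ * Matrix.diagonal μ * Y := by
      rw [hY, hA', Matrix.transpose_mul, Matrix.transpose_mul, hSymS, Matrix.transpose_transpose]
      simp only [Matrix.mul_assoc]
    rw [← hVt, hform]
    exact aux_key hd μ hdec Y hYY
end
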